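/- Let A_Γ be the 7 × 7 symmetric integer matrix with diagonal entries (-2, -3, -2, -2, -3, -2, -2) and off-diagonal (i,j)-entry equal to 1 precisely when {i,j} is one of {1,2}, {2,3}, {3,4}, {4,5}, {3,6}, {6,7}, and 0 otherwise. For every natural number N and every integer matrix B : Matrix (Fin N) (Fin 7) ℤ satisfying Bᵀ * B = -A_Γ, there exists a subset S of Fin N with exactly 7 elements such that B i j = 0 whenever i ∉ S; moreover, the 7 × 7 submatrix of B on the rows S has determinant 5 or -5. -/

import Mathlib

open Matrix Finset

@[simp] lemma cons_val_5' {α : Type*} {m : ℕ} (x : α) (u : Fin (m+5) → α) :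
    Matrix.vecCons x u 5 = u 4 := rfl
@[simp] lemma cons_val_6' {α : Type*} {m : ℕ} (x : α) (u : Fin (m+6) → α) :
    Matrix.vecCons x u 6 = u 5 := rfl
@[simp] lemma vecHead_const' {α : Type*} {n : ℕ} (a : α) :
    Matrix.vecHead (fun _ : Fin (n+1) => a) = a := rfl
@[simp] lemma vecTail_const' {α : Type*} {n : ℕ} (a : α) :
    Matrix.vecTail (fun _ : Fin (n+1) => a) = fun _ : Fin n => a := rfl

/-- The Gram matrix `-A_Γ`. -/
def Gmat : Matrix (Fin 7) (Fin 7) ℤ :=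
  !![2,-1,0,0,0,0,0; -1,3,-1,0,0,0,0; 0,-1,2,-1,0,-1,0; 0,0,-1,2,-1,0,0;
     0,0,0,-1,3,0,0; 0,0,-1,0,0,2,-1; 0,0,0,0,0,-1,2]

/-- `25 * Gmat⁻¹`, an integer matrix. -/
def Mmat : Matrix (Fin 7) (Fin 7) ℤ :=
  !![18,11,15,9,3,10,5; 11,22,30,18,6,20,10; 15,30,75,45,15,50,25;
     9,18,45,42,14,30,15; 3,6,15,14,13,10,5; 10,20,50,30,10,50,25; 5,10,25,15,5,25,25]

def Umat : Matrix (Fin 7) (Fin 7) ℤ :=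
  !![1,1,1,1,1,1,1; 0,2,2,2,2,2,2; 0,0,5,5,5,5,5; 0,0,0,8,8,3,3;
     0,0,0,0,11,1,1; 0,0,0,0,0,5,5; 0,0,0,0,0,0,5]
def Tmat : Matrix (Fin 7) (Fin 7) ℤ :=
  !![2,0,0,0,0,0,0; -1,5,0,0,0,0,0; 0,-2,8,0,0,0,0; 0,0,-5,11,0,0,0;
     0,0,0,-8,25,0,0; 0,0,-5,-5,-5,5,0; 0,0,0,0,0,-5,5]

/-- Quadratic form of `Mmat` as an explicit polynomial. -/
def tM (a b c d e f g : ℤ) : ℤ := 18*a*a + 22*b*b + 75*c*c + 42*d*d + 13*e*e + 50*f*f + 25*g*g + 22*a*b + 30*a*c + 18*a*d + 6*a*e + 20*a*f + 10*a*g + 60*b*c + 36*b*d + 12*b*e + 40*b*f + 20*b*g + 90*c*d + 30*c*e + 100*c*f + 50*c*g + 28*d*e + 60*d*f + 30*d*g + 20*e*f + 10*e*g + 50*f*g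

/-- Quadratic form of the LP-duality certificate matrix `Cmat`. -/
def tC (a b c d e f g : ℤ) : ℤ := 50*a*a + 100*b*b + 150*c*c + 84*d*d + 50*e*e + 100*f*f + 50*g*g + 100*a*b + 60*a*c + 36*a*d + 50*a*e + 40*a*f + 20*a*g + 332*b*c + 228*b*d + 100*b*e + 80*b*f + 40*b*g + 180*c*d + 60*c*e + 200*c*f + 100*c*g + 56*d*e + 120*d*f + 60*d*g + 40*e*f + 20*e*g + 100*f*g

def chk (a b c d e f g : ℤ) : Bool :=
  decide ((tM a b c d e f g)^2 ≤ 25 * tM a b c d e f g →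
    (tM a b c d e f g ≤ 25 ∧
      ((a = 0 ∧ b = 0 ∧ c = 0 ∧ d = 0 ∧ e = 0 ∧ f = 0 ∧ g = 0) ∨ 50 ≤ tC a b c d e f g)))

def Lsgn : List ℤ := [-1,0,1]

theorem keyB : (Lsgn.all fun a => Lsgn.all fun b => Lsgn.all fun c => Lsgn.all fun d =>
    Lsgn.all fun e => Lsgn.all fun f => Lsgn.all fun g => chk a b c d e f g) = true := by decide

theorem key : ∀ a ∈ Lsgn, ∀ b ∈ Lsgn, ∀ c ∈ Lsgn, ∀ d ∈ Lsgn, ∀ e ∈ Lsgn, ∀ f ∈ Lsgn, ∀ g ∈ Lsgn,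
    (tM a b c d e f g)^2 ≤ 25 * tM a b c d e f g →
    (tM a b c d e f g ≤ 25 ∧
      ((a = 0 ∧ b = 0 ∧ c = 0 ∧ d = 0 ∧ e = 0 ∧ f = 0 ∧ g = 0) ∨ 50 ≤ tC a b c d e f g)) := by
  intro a ha b hb c hc d hd e he f hf g hg
  have h := keyB
  rw [List.all_eq_true] at h
  have h := (List.all_eq_true.mp (h a ha)) b hb
  have h := (List.all_eq_true.mp h) c hc
  have h := (List.all_eq_true.mp h) d hd
  have h := (List.all_eq_true.mp h) e he
  have h := (List.all_eq_true.mp h) f hf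
  have h := (List.all_eq_true.mp h) g hg
  exact of_decide_eq_true h

set_option maxHeartbeats 1000000 in
lemma polyM (r : Fin 7 → ℤ) :
    r ⬝ᵥ (Mmat *ᵥ r) = tM (r 0) (r 1) (r 2) (r 3) (r 4) (r 5) (r 6) := by
  simp [dotProduct, mulVec, Mmat, tM, Fin.sum_univ_seven, Matrix.vecHead, Matrix.vecTail]
  ring

set_option maxHeartbeats 1000000 in
lemma hGM : Gmat * Mmat = (25 : ℤ) • (1 : Matrix (Fin 7) (Fin 7) ℤ) := by
  ext i j
  fin_cases i <;> fin_cases j <;>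
    simp [Matrix.mul_apply, Fin.sum_univ_seven, Gmat, Mmat, Matrix.one_apply,
      Matrix.vecHead, Matrix.vecTail]

set_option maxHeartbeats 1000000 in
set_option maxRecDepth 2000 in
lemma detG : Gmat.det = 25 := by
  have hLG : Gmat * Umat = Tmat := by
    ext i j
    fin_cases i <;> fin_cases j <;>
      simp [Matrix.mul_apply, Fin.sum_univ_seven, Gmat, Umat, Tmat, Matrix.vecHead, Matrix.vecTail]
  have hUtri : ∀ i j : Fin 7, j < i → Umat i j = 0 := by
    intro i j h; fin_cases i <;> fin_cases j <;> simp_all [Umat]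
  have hTtri : ∀ i j : Fin 7, i < j → Tmat i j = 0 := by
    intro i j h; fin_cases i <;> fin_cases j <;> simp_all [Tmat]
  have hU : Umat.det = 22000 := by
    rw [Matrix.det_of_upperTriangular (fun i j h => hUtri i j h)]
    simp [Fin.prod_univ_seven, Umat, Matrix.vecHead, Matrix.vecTail]
  have hT : Tmat.det = 550000 := by
    rw [Matrix.det_of_lowerTriangular Tmat
      (fun i j h => hTtri i j (OrderDual.toDual_lt_toDual.mp h))]
    simp [Fin.prod_univ_seven, Tmat, Matrix.vecHead, Matrix.vecTail]
  have h : Gmat.det * Umat.det = Tmat.det := by rw [← Matrix.det_mul, hLG]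
  rw [hU, hT] at h
  omega

set_option maxHeartbeats 2000000 in
set_option maxRecDepth 4000 in
theorem stmt_8 (N : ℕ) (B : Matrix (Fin N) (Fin 7) ℤ)
    (hB : B.transpose * B =
      -(!![-2, 1, 0, 0, 0, 0, 0;
           1, -3, 1, 0, 0, 0, 0;
           0, 1, -2, 1, 0, 1, 0;
           0, 0, 1, -2, 1, 0, 0;
           0, 0, 0, 1, -3, 0, 0;
           0, 0, 1, 0, 0, -2, 1;
           0, 0, 0, 0, 0, 1, -2] : Matrix (Fin 7) (Fin 7) ℤ)) :
    ∃ (S : Finset (Fin N)) (hS : S.card = 7),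
      (∀ i ∉ S, ∀ j, B i j = 0) ∧
      (Matrix.det (Matrix.of fun a b : Fin 7 => B ((S.orderIsoOfFin hS a : Fin N)) b) = 5 ∨
        Matrix.det (Matrix.of fun a b : Fin 7 => B ((S.orderIsoOfFin hS a : Fin N)) b) = -5) := by
  classical
  have hG : B.transpose * B = Gmat := by
    rw [hB]; ext i j; fin_cases i <;> fin_cases j <;> simp [Gmat]
  -- Gram entries
  have hgram : ∀ j k : Fin 7, (∑ i, B i j * B i k) = Gmat j k := by
    intro j k; rw [← hG]; simp [Matrix.mul_apply]
  -- entries in {-1,0,1}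
  have hmem : ∀ i j, B i j = -1 ∨ B i j = 0 ∨ B i j = 1 := by
    intro i j
    have h1 : (B i j)^2 ≤ ∑ i', (B i' j)^2 :=
      Finset.single_le_sum (fun k _ => sq_nonneg (B k j)) (mem_univ i)
    have h2 : ∑ i', (B i' j)^2 = Gmat j j := by
      rw [← hgram j j]
      exact Finset.sum_congr rfl (fun k _ => sq (B k j))
    have h3 : Gmat j j ≤ 3 := by fin_cases j <;> simp [Gmat]
    have h4 : (B i j)^2 ≤ 3 := by linarith
    have h5 : -1 ≤ B i j := by nlinarith
    have h6 : B i j ≤ 1 := by nlinarith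
    omega
  -- quadratic identity
  have hquad : ∀ w : Fin 7 → ℤ, ∑ i, ((B *ᵥ w) i)^2 = w ⬝ᵥ (Gmat *ᵥ w) := by
    intro w
    have h1 : ∑ i, ((B *ᵥ w) i)^2 = (B *ᵥ w) ⬝ᵥ (B *ᵥ w) := by
      simp [dotProduct, sq]
    rw [h1, ← hG, ← Matrix.mulVec_mulVec, Matrix.dotProduct_mulVec (v := w),
      Matrix.vecMul_transpose, Matrix.dotProduct_mulVec]
  set t : Fin N → ℤ := fun i => tM (B i 0) (B i 1) (B i 2) (B i 3) (B i 4) (B i 5) (B i 6)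
    with ht
  set c : Fin N → ℤ := fun i => tC (B i 0) (B i 1) (B i 2) (B i 3) (B i 4) (B i 5) (B i 6)
    with hc
  -- per-row inequality
  have hrow : ∀ i, (t i)^2 ≤ 25 * t i := by
    intro i
    set r : Fin 7 → ℤ := fun j => B i j with hr
    have hw := hquad (Mmat *ᵥ r)
    have h1 : ((B *ᵥ (Mmat *ᵥ r)) i)^2 ≤ ∑ i', ((B *ᵥ (Mmat *ᵥ r)) i')^2 :=
      Finset.single_le_sum (f := fun i' => ((B *ᵥ (Mmat *ᵥ r)) i')^2)
        (fun k _ => sq_nonneg _) (mem_univ i)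
    have h2 : (B *ᵥ (Mmat *ᵥ r)) i = t i := by
      show r ⬝ᵥ (Mmat *ᵥ r) = t i
      rw [polyM r, ht]
    have h3 : (Mmat *ᵥ r) ⬝ᵥ (Gmat *ᵥ (Mmat *ᵥ r)) = 25 * t i := by
      rw [Matrix.mulVec_mulVec, hGM, Matrix.smul_mulVec, Matrix.one_mulVec,
        dotProduct_smul, dotProduct_comm, polyM r, ht]
      simp [zsmul_eq_mul]
      rfl
    rw [h2] at h1
    rw [h3] at hw
    linarith [hw, h1]
  have hLmem : ∀ i j, B i j ∈ Lsgn := by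
    intro i j
    rcases hmem i j with h | h | h <;> simp [Lsgn, h]
  have hkey : ∀ i, t i ≤ 25 ∧ ((∀ j, B i j = 0) ∨ 50 ≤ c i) := by
    intro i
    have h := key (B i 0) (hLmem i 0) (B i 1) (hLmem i 1) (B i 2) (hLmem i 2)
      (B i 3) (hLmem i 3) (B i 4) (hLmem i 4) (B i 5) (hLmem i 5) (B i 6) (hLmem i 6)
      (hrow i)
    refine ⟨h.1, ?_⟩
    rcases h.2 with h2 | h2
    · left; intro j; fin_cases j <;> tauto
    · right; exact h2
  -- total sums
  have hsumt : ∑ i, t i = 175 := by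
    have expand : ∀ i, t i =
        18*(B i 0*B i 0) + 22*(B i 1*B i 1) + 75*(B i 2*B i 2) + 42*(B i 3*B i 3) +
        13*(B i 4*B i 4) + 50*(B i 5*B i 5) + 25*(B i 6*B i 6) +
        22*(B i 0*B i 1) + 30*(B i 0*B i 2) + 18*(B i 0*B i 3) + 6*(B i 0*B i 4) +
        20*(B i 0*B i 5) + 10*(B i 0*B i 6) + 60*(B i 1*B i 2) + 36*(B i 1*B i 3) +
        12*(B i 1*B i 4) + 40*(B i 1*B i 5) + 20*(B i 1*B i 6) + 90*(B i 2*B i 3) +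
        30*(B i 2*B i 4) + 100*(B i 2*B i 5) + 50*(B i 2*B i 6) + 28*(B i 3*B i 4) +
        60*(B i 3*B i 5) + 30*(B i 3*B i 6) + 20*(B i 4*B i 5) + 10*(B i 4*B i 6) +
        50*(B i 5*B i 6) := by
      intro i; rw [ht]; simp only [tM]; ring
    rw [Finset.sum_congr rfl (fun i _ => expand i)]
    simp only [Finset.sum_add_distrib, ← Finset.mul_sum, hgram]
    simp [Gmat]
  have hsumc : ∑ i, c i = 350 := by
    have expand : ∀ i, c i =
        50*(B i 0*B i 0) + 100*(B i 1*B i 1) + 150*(B i 2*B i 2) + 84*(B i 3*B i 3) +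
        50*(B i 4*B i 4) + 100*(B i 5*B i 5) + 50*(B i 6*B i 6) +
        100*(B i 0*B i 1) + 60*(B i 0*B i 2) + 36*(B i 0*B i 3) + 50*(B i 0*B i 4) +
        40*(B i 0*B i 5) + 20*(B i 0*B i 6) + 332*(B i 1*B i 2) + 228*(B i 1*B i 3) +
        100*(B i 1*B i 4) + 80*(B i 1*B i 5) + 40*(B i 1*B i 6) + 180*(B i 2*B i 3) +
        60*(B i 2*B i 4) + 200*(B i 2*B i 5) + 100*(B i 2*B i 6) + 56*(B i 3*B i 4) +
        120*(B i 3*B i 5) + 60*(B i 3*B i 6) + 40*(B i 4*B i 5) + 20*(B i 4*B i 6) +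
        100*(B i 5*B i 6) := by
      intro i; rw [hc]; simp only [tC]; ring
    rw [Finset.sum_congr rfl (fun i _ => expand i)]
    simp only [Finset.sum_add_distrib, ← Finset.mul_sum, hgram]
    simp [Gmat]
  -- the support
  set S : Finset (Fin N) := univ.filter (fun i => ¬ ∀ j, B i j = 0) with hSdef
  have hout : ∀ i ∉ S, ∀ j, B i j = 0 := by
    intro i hi
    by_contra h
    exact hi (by simp only [hSdef, Finset.mem_filter, Finset.mem_univ, true_and]; exact h)
  have htzero : ∀ i ∉ S, t i = 0 := by
    intro i hi
    have h := hout i hi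
    rw [ht]; simp only [h 0, h 1, h 2, h 3, h 4, h 5, h 6, tM]; ring
  have hczero : ∀ i ∉ S, c i = 0 := by
    intro i hi
    have h := hout i hi
    rw [hc]; simp only [h 0, h 1, h 2, h 3, h 4, h 5, h 6, tC]; ring
  have hsumtS : ∑ i ∈ S, t i = 175 := by
    rw [Finset.sum_subset (Finset.subset_univ S) (fun x _ hx => htzero x hx)]
    exact hsumt
  have hsumcS : ∑ i ∈ S, c i = 350 := by
    rw [Finset.sum_subset (Finset.subset_univ S) (fun x _ hx => hczero x hx)]
    exact hsumc
  have card1 : (175 : ℤ) ≤ S.card * 25 := by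
    have h := Finset.sum_le_card_nsmul S t 25 (fun i _ => (hkey i).1)
    rw [hsumtS] at h
    simpa [nsmul_eq_mul] using h
  have card2 : (S.card : ℤ) * 50 ≤ 350 := by
    have h := Finset.card_nsmul_le_sum S c 50 (fun i hi => by
      rcases (hkey i).2 with h2 | h2
      · exact absurd h2 (by simpa [hSdef] using hi)
      · exact h2)
    rw [hsumcS] at h
    simpa [nsmul_eq_mul] using h
  have hcard : S.card = 7 := by
    have h1 : (7 : ℤ) ≤ S.card := by linarith
    have h2 : (S.card : ℤ) ≤ 7 := by linarith
    exact_mod_cast le_antisymm h2 h1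
  refine ⟨S, hcard, hout, ?_⟩
  set e := S.orderIsoOfFin hcard with he
  set B' : Matrix (Fin 7) (Fin 7) ℤ := Matrix.of (fun a b : Fin 7 => B (e a) b) with hB'
  have hB'G : B'.transpose * B' = Gmat := by
    ext j k
    rw [Matrix.mul_apply]
    have h1 : ∑ a, B'.transpose j a * B' a k = ∑ a : Fin 7, B (e a) j * B (e a) k := by
      apply Finset.sum_congr rfl
      intro a _
      simp [hB', Matrix.transpose_apply]
    rw [h1]
    have h2 : ∑ a : Fin 7, B (e a) j * B (e a) k = ∑ x : {x // x ∈ S}, B x j * B x k :=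
      Equiv.sum_comp e.toEquiv (fun x : {x // x ∈ S} => B x j * B x k)
    rw [h2, Finset.sum_coe_sort S (fun i => B i j * B i k),
      Finset.sum_subset (Finset.subset_univ S)
        (fun x _ hx => by rw [hout x hx j]; ring), hgram j k]
  have hdet : B'.det * B'.det = 25 := by
    have h : B'.transpose.det * B'.det = Gmat.det := by rw [← Matrix.det_mul, hB'G]
    rwa [Matrix.det_transpose, detG] at h
  have hfact : (B'.det - 5) * (B'.det + 5) = 0 := by linear_combination hdet
  rcases mul_eq_zero.mp hfact with h | h
  · left; omega
  · right; omega
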